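/- Let n ≥ 3, let M be an n×m matrix over the field F₂ with two elements, and let d be a natural number with 2n < d. Suppose that for every nonzero vector c ∈ F₂^n, the vector Mᵀc ∈ F₂^m has Hamming weight greater than d. Let N = n·⌈m/d⌉. Then N < m, and the number of subsets S ⊆ {1,…,m} with |S| = N such that M[S] has full rank is at least C(m, N)/2. -/
import Mathlib
open Matrix

-- C(a,N)/C(b,N) ≤ (a/b)^N in ℕ-cleared form
lemma aux_choose (N a b : ℕ) (hab : a ≤ b) :
    a.choose N * b ^ N ≤ b.choose N * a ^ N := by
  have key : a.descFactorial N * b ^ N ≤ b.descFactorial N * a ^ N := by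
    have hb : b ^ N = ∏ _i ∈ Finset.range N, b := by simp
    have ha : a ^ N = ∏ _i ∈ Finset.range N, a := by simp
    rw [Nat.descFactorial_eq_prod_range, Nat.descFactorial_eq_prod_range, hb, ha,
      ← Finset.prod_mul_distrib, ← Finset.prod_mul_distrib]
    apply Finset.prod_le_prod'
    intro i _
    rw [Nat.sub_mul, Nat.sub_mul, Nat.mul_comm a b]
    exact Nat.sub_le_sub_left (Nat.mul_le_mul_left i hab) _
  rw [Nat.descFactorial_eq_factorial_mul_choose, Nat.descFactorial_eq_factorial_mul_choose,
    mul_assoc, mul_assoc] at key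
  exact Nat.le_of_mul_le_mul_left key (Nat.factorial_pos N)

lemma aux_dual {n : ℕ} (p : Submodule (ZMod 2) (Fin n → ZMod 2)) (hp : p ≠ ⊤) :
    ∃ c : Fin n → ZMod 2, c ≠ 0 ∧ ∀ v ∈ p, ∑ i, v i * c i = 0 := by
  obtain ⟨f, hf0, hf⟩ := Submodule.exists_dual_map_eq_bot_of_lt_top
    (lt_top_iff_ne_top.mpr hp) inferInstance
  refine ⟨fun i => f (fun j => if i = j then 1 else 0), ?_, ?_⟩
  · intro hc
    apply hf0
    refine LinearMap.ext fun x => ?_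
    rw [LinearMap.pi_apply_eq_sum_univ f x]
    simp only [LinearMap.zero_apply]
    have : ∀ i : Fin n, f (fun j => if i = j then 1 else 0) = 0 := fun i => congrFun hc i
    simp [this]
  · intro v hv
    have hfv : f v = 0 := by
      have : f v ∈ p.map f := Submodule.mem_map_of_mem hv
      rw [hf] at this
      simpa using this
    rw [LinearMap.pi_apply_eq_sum_univ f v] at hfv
    simpa [smul_eq_mul] using hfv

theorem stmt_18 (n m d : ℕ) (hn : 3 ≤ n) (hd : 2 * n < d)
    (M : Matrix (Fin n) (Fin m) (ZMod 2))
    (h : ∀ c : Fin n → ZMod 2, c ≠ 0 →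
      d < (Finset.univ.filter fun j => Mᵀ.mulVec c j ≠ 0).card) :
    n * ⌈(m : ℝ) / d⌉₊ < m ∧
      (m.choose (n * ⌈(m : ℝ) / d⌉₊) : ℝ) / 2 ≤
        ({S : Finset (Fin m) | S.card = n * ⌈(m : ℝ) / d⌉₊ ∧
          Submodule.span (ZMod 2) ((fun j : Fin m => fun r => M r j) '' ↑S) = ⊤}.ncard : ℝ) := by
  classical
  set k : ℕ := ⌈(m : ℝ) / d⌉₊ with hkdef
  set N : ℕ := n * k with hNdef
  have hd0 : 0 < d := by omega
  have hdR : (0:ℝ) < d := by exact_mod_cast hd0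
  -- d < m
  have hdm : d < m := by
    have hcne : (Pi.single (⟨0, by omega⟩ : Fin n) (1 : ZMod 2) : Fin n → ZMod 2) ≠ 0 := by
      intro h0
      have := congrFun h0 ⟨0, by omega⟩
      simp at this
    have h2 := h _ hcne
    have h3 := Finset.card_filter_le (Finset.univ : Finset (Fin m))
      (fun j => Mᵀ.mulVec (Pi.single ⟨0, by omega⟩ 1) j ≠ 0)
    simp only [Finset.card_univ, Fintype.card_fin] at h3
    omega
  have hm0 : 0 < m := by omega
  have hmR : (0:ℝ) < m := by exact_mod_cast hm0
  -- bounds on k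
  have hkd : (m : ℝ) ≤ (k : ℝ) * d := by
    have h1 := Nat.le_ceil ((m:ℝ) / d)
    rw [div_le_iff₀ hdR] at h1
    exact_mod_cast h1
  have hkub : (k : ℝ) * d < m + d := by
    have h1 : (k:ℝ) < (m:ℝ)/d + 1 := by
      exact_mod_cast Nat.ceil_lt_add_one (by positivity : (0:ℝ) ≤ (m:ℝ)/d)
    have h2 : ((m:ℝ)/d + 1) * d = m + d := by field_simp
    nlinarith [mul_lt_mul_of_pos_right h1 hdR]
  -- N < m
  have hNmR : (N : ℝ) < m := by
    have hnR : (3:ℝ) ≤ n := by exact_mod_cast hn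
    have hdnR : 2 * (n:ℝ) + 1 ≤ d := by exact_mod_cast hd
    have hmdR : (d:ℝ) + 1 ≤ m := by exact_mod_cast hdm
    have hcast : (N : ℝ) = (n:ℝ) * k := by push_cast [hNdef]; ring
    rw [hcast]
    rw [show (m:ℝ) = (m:ℝ)*d/d by field_simp]
    rw [lt_div_iff₀ hdR]
    nlinarith [hkub, hkd]
  have hNm : N < m := by exact_mod_cast hNmR
  refine ⟨hNm, ?_⟩
  -- finset bookkeeping
  set P : Finset (Finset (Fin m)) := Finset.powersetCard N Finset.univ with hPdef
  set spans : Finset (Fin m) → Prop := fun S =>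
    Submodule.span (ZMod 2) ((fun j : Fin m => fun r => M r j) '' ↑S) = ⊤ with hspansdef
  set good : Finset (Finset (Fin m)) := P.filter (fun S => spans S) with hgooddef
  set bad : Finset (Finset (Fin m)) := P.filter (fun S => ¬ spans S) with hbaddef
  have hseteq : {S : Finset (Fin m) | S.card = N ∧ spans S} = ↑good := by
    ext S
    simp [hgooddef, hPdef, Finset.mem_powersetCard, and_comm]
  rw [show ({S : Finset (Fin m) | S.card = N ∧
          Submodule.span (ZMod 2) ((fun j : Fin m => fun r => M r j) '' ↑S) = ⊤}) =
        {S : Finset (Fin m) | S.card = N ∧ spans S} from rfl, hseteq, Set.ncard_coe_finset]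
  have hPcard : P.card = m.choose N := by
    simp [hPdef]
  have hsplit : good.card + bad.card = m.choose N := by
    rw [hgooddef, hbaddef, Finset.card_filter_add_card_filter_not, hPcard]
  -- bad bound
  set a : ℕ := m - (d + 1) with hadef
  have hbad : bad.card ≤ 2 ^ n * a.choose N := by
    have hsub : bad ⊆ (Finset.univ.filter (fun c : Fin n → ZMod 2 => c ≠ 0)).biUnion
        (fun c => Finset.powersetCard N (Finset.univ.filter (fun j => ¬ Mᵀ.mulVec c j ≠ 0))) := by
      intro S hS
      rw [hbaddef, Finset.mem_filter, hPdef, Finset.mem_powersetCard] at hS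
      obtain ⟨⟨_, hcard⟩, hnt⟩ := hS
      obtain ⟨c, hc0, hcv⟩ := aux_dual _ hnt
      rw [Finset.mem_biUnion]
      refine ⟨c, by simp [hc0], ?_⟩
      rw [Finset.mem_powersetCard]
      refine ⟨fun j hj => ?_, hcard⟩
      rw [Finset.mem_filter]
      refine ⟨Finset.mem_univ j, ?_⟩
      have hcol : (fun r => M r j) ∈ Submodule.span (ZMod 2)
          ((fun j : Fin m => fun r => M r j) '' ↑S) :=
        Submodule.subset_span ⟨j, hj, rfl⟩
      have hz := hcv _ hcol
      simp only [not_not]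
      simpa [Matrix.mulVec, dotProduct, Matrix.transpose_apply] using hz
    have hcount : ∀ c : Fin n → ZMod 2, c ≠ 0 →
        (Finset.powersetCard N (Finset.univ.filter (fun j => ¬ Mᵀ.mulVec c j ≠ 0))).card
          ≤ a.choose N := by
      intro c hc
      rw [Finset.card_powersetCard]
      apply Nat.choose_le_choose
      have h1 := h c hc
      have h2 := Finset.card_filter_add_card_filter_not
        (s := (Finset.univ : Finset (Fin m))) (p := fun j => Mᵀ.mulVec c j ≠ 0)
      simp only [Finset.card_univ, Fintype.card_fin] at h2
      omega
    calc bad.card ≤ ((Finset.univ.filter (fun c : Fin n → ZMod 2 => c ≠ 0)).biUnion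
          (fun c => Finset.powersetCard N
            (Finset.univ.filter (fun j => ¬ Mᵀ.mulVec c j ≠ 0)))).card :=
        Finset.card_le_card hsub
      _ ≤ ∑ c ∈ Finset.univ.filter (fun c : Fin n → ZMod 2 => c ≠ 0),
            (Finset.powersetCard N
              (Finset.univ.filter (fun j => ¬ Mᵀ.mulVec c j ≠ 0))).card :=
        Finset.card_biUnion_le
      _ ≤ ∑ c ∈ Finset.univ.filter (fun c : Fin n → ZMod 2 => c ≠ 0), a.choose N :=
        Finset.sum_le_sum (fun c hc => hcount c (by simpa using (Finset.mem_filter.mp hc).2))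
      _ = (Finset.univ.filter (fun c : Fin n → ZMod 2 => c ≠ 0)).card * a.choose N := by
        rw [Finset.sum_const, smul_eq_mul]
      _ ≤ 2 ^ n * a.choose N := by
        apply Nat.mul_le_mul_right
        calc (Finset.univ.filter (fun c : Fin n → ZMod 2 => c ≠ 0)).card
            ≤ (Finset.univ : Finset (Fin n → ZMod 2)).card := Finset.card_filter_le _ _
          _ = 2 ^ n := by simp [Finset.card_univ]
  -- real arithmetic
  have haR : (a:ℝ) = (m:ℝ) - ((d:ℝ) + 1) := by
    rw [hadef, Nat.cast_sub (by omega : d + 1 ≤ m)]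
    push_cast
    ring
  set ρ : ℝ := (a:ℝ)/(m:ℝ) with hρdef
  have hρ0 : (0:ℝ) ≤ ρ := by positivity
  have hρle : ρ ≤ Real.exp (-(((d:ℝ)+1)/m)) := by
    have hb := Real.add_one_le_exp (-(((d:ℝ)+1)/m))
    have hρeq : ρ = 1 - ((d:ℝ)+1)/m := by rw [hρdef, haR]; field_simp
    rw [hρeq]
    linarith
  have hρk : ρ^k ≤ Real.exp (-1) := by
    calc ρ^k ≤ (Real.exp (-(((d:ℝ)+1)/m)))^k := pow_le_pow_left₀ hρ0 hρle k
      _ = Real.exp ((k:ℝ) * (-(((d:ℝ)+1)/m))) := by rw [Real.exp_nat_mul]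
      _ ≤ Real.exp (-1) := by
          apply Real.exp_le_exp.mpr
          have hm1 : (m:ℝ) ≤ (k:ℝ)*((d:ℝ)+1) := by nlinarith [Nat.cast_nonneg (α := ℝ) k]
          have h1 : (1:ℝ) ≤ ((k:ℝ)*((d:ℝ)+1))/m := (one_le_div hmR).mpr hm1
          rw [mul_neg, mul_div_assoc] at *
          linarith [h1, (mul_div_assoc (k:ℝ) ((d:ℝ)+1) (m:ℝ))]
  have hmN : (0:ℝ) < (m:ℝ)^N := pow_pos hmR N
  have hchoose := aux_choose N a m (by omega)
  have h2' : (a.choose N:ℝ) ≤ (m.choose N:ℝ) * ρ^N := by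
    have hρN : ρ^N = (a:ℝ)^N/(m:ℝ)^N := by rw [hρdef, div_pow]
    rw [hρN, ← mul_div_assoc, le_div_iff₀ hmN]
    exact_mod_cast hchoose
  have hρNeq : ρ^N = (ρ^k)^n := by rw [hNdef, Nat.mul_comm, pow_mul]
  have he1 : Real.exp (-1) ≤ 0.368 := by
    have hmulinv : Real.exp (-1) * Real.exp 1 = 1 := by
      rw [← Real.exp_add]; norm_num
    nlinarith [Real.exp_one_gt_d9, hmulinv, Real.exp_pos (-1)]
  have hfin : (2*Real.exp (-1))^n ≤ 1/2 := by
    have h1 : 2*Real.exp (-1) ≤ 0.736 := by linarith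
    have h0 : (0:ℝ) ≤ 2*Real.exp (-1) := by positivity
    calc (2*Real.exp (-1))^n ≤ (0.736:ℝ)^n := pow_le_pow_left₀ h0 h1 n
      _ ≤ (0.736:ℝ)^3 := pow_le_pow_of_le_one (by norm_num) (by norm_num) hn
      _ ≤ 1/2 := by norm_num
  have hbadR : (bad.card:ℝ) ≤ (m.choose N:ℝ)/2 := by
    calc (bad.card:ℝ) ≤ (2:ℝ)^n * (a.choose N:ℝ) := by exact_mod_cast hbad
      _ ≤ (2:ℝ)^n * ((m.choose N:ℝ) * ρ^N) :=
        mul_le_mul_of_nonneg_left h2' (by positivity)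
      _ = (m.choose N:ℝ) * (2*ρ^k)^n := by rw [hρNeq, mul_pow]; ring
      _ ≤ (m.choose N:ℝ) * (1/2) := by
        apply mul_le_mul_of_nonneg_left _ (by positivity)
        calc (2*ρ^k)^n ≤ (2*Real.exp (-1))^n :=
            pow_le_pow_left₀ (by positivity) (by linarith) n
          _ ≤ 1/2 := hfin
      _ = (m.choose N:ℝ)/2 := by ring
  have hsplitR : (good.card:ℝ) + (bad.card:ℝ) = (m.choose N:ℝ) := by exact_mod_cast hsplit
  linarith
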